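/- Let {h_j}_{j∈J} be a Riesz partition of unity with bounds p, P, and let {S_j}_{j∈J} and {Q_j}_{j∈J} be coverings of ℝ^d with Q_j ⊆ S_j and |h_j(x)|² ≥ c a.e. on Q_j for all j, for some constant c > 0. Suppose for each j, {g_{j,k}}_{k∈K} is a frame for K_{S_j} with bounds m_j, M_j, with m := inf_j m_j > 0 and M := sup_j M_j < ∞. Then {h_j g_{j,k} : j ∈ J, k ∈ K} is a frame for L²(ℝ^d) with frame bounds cm and PM. -/

import Mathlib

open MeasureTheory Filter Topology
open scoped ENNReal NNReal
noncomputable section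
abbrev Rd (d : ℕ) := Fin d → ℝ
abbrev L2 (d : ℕ) := Lp ℂ 2 (volume : Measure (Rd d))
/-- `K_Q`: elements of `L²(ℝ^d)` supported (a.e.) in the closure of `Q`. -/
def Ksp {d : ℕ} (Q : Set (Rd d)) : Set (L2 d) :=
  {f | ∀ᵐ x ∂(volume : Measure (Rd d)), x ∉ closure Q → f x = 0}
/-- `g` is a frame for the subset `F` of `L²(ℝ^d)` with bounds `m`, `M`. -/
def IsFrameWith {d : ℕ} {J : Type*} (g : J → L2 d) (F : Set (L2 d)) (m M : ℝ) : Prop :=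
  (∀ j, g j ∈ F) ∧
  ∀ f ∈ F, m * ‖f‖ ^ 2 ≤ ∑' j, ‖(inner ℂ f (g j) : ℂ)‖ ^ 2 ∧
    (∑' j, ‖(inner ℂ f (g j) : ℂ)‖ ^ 2) ≤ M * ‖f‖ ^ 2
lemma norm_sq_ofReal {d : ℕ} (v : L2 d) :
    ENNReal.ofReal (‖v‖ ^ 2) = ∫⁻ x, (‖v x‖₊ : ℝ≥0∞) ^ 2 ∂(volume : Measure (Rd d)) := by
  have hsn := eLpNorm_eq_lintegral_rpow_enorm_toReal (f := (v : Rd d → ℂ))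
    (two_ne_zero) (ENNReal.ofNat_ne_top) (μ := (volume : Measure (Rd d)))
  simp only [enorm_eq_nnnorm] at hsn
  have h2 : (2 : ℝ≥0∞).toReal = 2 := by simp
  rw [h2] at hsn
  have hpt : ∀ x : Rd d, ((‖v x‖₊ : ℝ≥0∞)) ^ (2 : ℝ) = (‖v x‖₊ : ℝ≥0∞) ^ (2 : ℕ) := by
    intro x
    rw [← ENNReal.rpow_natCast (‖v x‖₊ : ℝ≥0∞) 2]
    norm_num
  rw [funext hpt] at hsn
  set I := ∫⁻ x, (‖v x‖₊ : ℝ≥0∞) ^ (2:ℕ) ∂(volume : Measure (Rd d)) with hI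
  have hfin : eLpNorm (v : Rd d → ℂ) 2 volume ≠ ⊤ := Lp.eLpNorm_ne_top v
  have hIfin : I ≠ ⊤ := by
    intro htop
    rw [htop] at hsn
    rw [ENNReal.top_rpow_of_pos (by norm_num)] at hsn
    exact hfin hsn
  have ha : (I ^ (1/2 : ℝ)) ≠ ⊤ := ENNReal.rpow_ne_top_of_nonneg (by norm_num) hIfin
  rw [Lp.norm_def, hsn]
  rw [← ENNReal.toReal_pow, ENNReal.ofReal_toReal (by
    rw [← ENNReal.rpow_natCast]
    rw [← ENNReal.rpow_mul]
    norm_num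
    exact hIfin)]
  rw [← ENNReal.rpow_natCast, ← ENNReal.rpow_mul]
  norm_num

/-- Corollary: `{h_j}` an RPU with bounds `p,P`; `{S_j}`, `{Q_j}` coverings of `ℝ^d`
with `Q_j ⊆ S_j` and `|h_j|² ≥ c` a.e. on `Q_j`; `{g_{j,k}}_k` a frame for `K_{S_j}`
with bounds `m_j, M_j`, `m = inf m_j > 0`, `M = sup M_j < ∞`. Then `{h_j g_{j,k}}`
is a frame for `L²(ℝ^d)` with bounds `cm, PM`. -/
theorem stmt6 {d : ℕ} {J K : Type*} [Countable J] [Countable K]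
    (S Q : J → Set (Rd d)) (hSm : ∀ j, MeasurableSet (S j)) (hQm : ∀ j, MeasurableSet (Q j))
    (hQS : ∀ j, Q j ⊆ S j)
    (hScover : volume ((Set.univ : Set (Rd d)) \ ⋃ j, S j) = 0)
    (hQcover : volume ((Set.univ : Set (Rd d)) \ ⋃ j, Q j) = 0)
    (h : J → Rd d → ℂ) (hmeas : ∀ j, Measurable (h j))
    (p P c : ℝ) (hp : 0 < p) (hc : 0 < c)
    (hRPU : ∀ᵐ x ∂(volume : Measure (Rd d)),
      p ≤ ∑' j, ‖h j x‖ ^ 2 ∧ (∑' j, ‖h j x‖ ^ 2) ≤ P)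
    (hlow : ∀ j, ∀ᵐ x ∂(volume : Measure (Rd d)), x ∈ Q j → c ≤ ‖h j x‖ ^ 2)
    (g : J → K → L2 d) (mj Mj : J → ℝ) (m M : ℝ) (hm : 0 < m)
    (hmj : ∀ j, m ≤ mj j) (hMj : ∀ j, Mj j ≤ M)
    (hframe : ∀ j, IsFrameWith (g j) (Ksp (S j)) (mj j) (Mj j))
    (hg : J × K → L2 d)
    (hhg : ∀ j k, ∀ᵐ x ∂(volume : Measure (Rd d)), hg (j, k) x = h j x * g j k x) :
    IsFrameWith hg (Set.univ : Set (L2 d)) (c * m) (P * M) := by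
  classical
  constructor
  · intro _; trivial
  intro f _
  -- a.e. summability and pointwise bound
  have hae_sum : ∀ᵐ x ∂(volume : Measure (Rd d)), Summable (fun j => ‖h j x‖ ^ 2) := by
    filter_upwards [hRPU] with x hx
    by_contra hns
    rw [tsum_eq_zero_of_not_summable hns] at hx
    linarith [hx.1]
  have hbound : ∀ j, ∀ᵐ x ∂(volume : Measure (Rd d)), ‖h j x‖ ^ 2 ≤ P := by
    intro j
    filter_upwards [hRPU, hae_sum] with x hx hsx
    exact le_trans (hsx.le_tsum j fun k _ => sq_nonneg _) hx.2
  have hfm : AEStronglyMeasurable (f : Rd d → ℂ) volume := Lp.aestronglyMeasurable f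
  -- the localized functions
  set F : J → Rd d → ℂ :=
    fun j x => (closure (S j)).indicator (fun y => (starRingEnd ℂ) (h j y) * f y) x with hF
  have hFmeas : ∀ j, AEStronglyMeasurable (F j) volume := by
    intro j
    exact AEStronglyMeasurable.indicator
      (((Complex.continuous_conj.measurable.comp (hmeas j)).aestronglyMeasurable).mul hfm)
      isClosed_closure.measurableSet
  have hF2 : ∀ j, MemLp (F j) 2 volume := by
    intro j
    refine MemLp.of_le_mul (c := Real.sqrt P) (Lp.memLp f) (hFmeas j) ?_
    filter_upwards [hbound j] with x hx
    have h1 : ‖h j x‖ ≤ Real.sqrt P := by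
      rw [← Real.sqrt_sq (norm_nonneg (h j x))]
      exact Real.sqrt_le_sqrt hx
    calc ‖F j x‖ ≤ ‖(starRingEnd ℂ) (h j x) * f x‖ := norm_indicator_le_norm_self _ x
      _ = ‖h j x‖ * ‖f x‖ := by rw [norm_mul, RCLike.norm_conj]
      _ ≤ Real.sqrt P * ‖f x‖ := mul_le_mul_of_nonneg_right h1 (norm_nonneg _)
  set u : J → L2 d := fun j => (hF2 j).toLp (F j) with hu
  have hu_ae : ∀ j, (u j : Rd d → ℂ) =ᵐ[volume] F j := fun j => (hF2 j).coeFn_toLp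
  have hu_mem : ∀ j, u j ∈ Ksp (S j) := by
    intro j
    simp only [Ksp, Set.mem_setOf_eq]
    filter_upwards [hu_ae j] with x hx hxs
    rw [hx]
    exact Set.indicator_of_notMem hxs _
  -- the key inner product identity
  have hgsupp : ∀ j k, ∀ᵐ x ∂(volume : Measure (Rd d)),
      x ∉ closure (S j) → (g j k : Rd d → ℂ) x = 0 := by
    intro j k
    have := (hframe j).1 k
    simpa only [Ksp, Set.mem_setOf_eq] using this
  have hinner : ∀ j k, (inner ℂ f (hg (j, k)) : ℂ) = (inner ℂ (u j) (g j k) : ℂ) := by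
    intro j k
    rw [L2.inner_def, L2.inner_def]
    refine integral_congr_ae ?_
    filter_upwards [hhg j k, hgsupp j k, hu_ae j] with x hx1 hx2 hx3
    simp only [RCLike.inner_apply, hx1, hx3, hF]
    by_cases hxs : x ∈ closure (S j)
    · rw [Set.indicator_of_mem hxs]
      simp only [map_mul, Complex.conj_conj]
      ring
    · rw [Set.indicator_of_notMem hxs, hx2 hxs]
      ring
  -- per-j frame bounds
  have hTle : ∀ j, (∑' k, ‖(inner ℂ f (hg (j,k)) : ℂ)‖ ^ 2)
      = ∑' k, ‖(inner ℂ (u j) (g j k) : ℂ)‖ ^ 2 :=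
    fun j => tsum_congr fun k => by rw [hinner]
  have hlowj : ∀ j, m * ‖u j‖ ^ 2 ≤ ∑' k, ‖(inner ℂ f (hg (j,k)) : ℂ)‖ ^ 2 := by
    intro j
    rw [hTle j]
    exact le_trans (mul_le_mul_of_nonneg_right (hmj j) (sq_nonneg _))
      ((hframe j).2 (u j) (hu_mem j)).1
  have hhighj : ∀ j, (∑' k, ‖(inner ℂ f (hg (j,k)) : ℂ)‖ ^ 2) ≤ M * ‖u j‖ ^ 2 := by
    intro j
    rw [hTle j]
    exact le_trans ((hframe j).2 (u j) (hu_mem j)).2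
      (mul_le_mul_of_nonneg_right (hMj j) (sq_nonneg _))
  have hsumk : ∀ j, Summable (fun k => ‖(inner ℂ f (hg (j,k)) : ℂ)‖ ^ 2) := by
    intro j
    by_contra hns
    have h0 := hlowj j
    rw [tsum_eq_zero_of_not_summable hns] at h0
    have hsq : ‖u j‖ ^ 2 ≤ 0 := by nlinarith [sq_nonneg ‖u j‖]
    have huz : u j = 0 := by
      have : ‖u j‖ = 0 := by nlinarith [norm_nonneg (u j)]
      exact norm_eq_zero.mp this
    apply hns
    have hz : ∀ k, ‖(inner ℂ f (hg (j,k)) : ℂ)‖ ^ 2 = 0 := by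
      intro k; rw [hinner j k, huz]; simp
    exact (summable_congr hz).mpr summable_zero
  -- lintegral computations
  have hfnn : AEMeasurable (fun x => (‖f x‖₊ : ℝ≥0∞) ^ 2) volume :=
    hfm.enorm.pow_const 2
  set W : J → Rd d → ℝ≥0∞ := fun j x =>
    (closure (S j)).indicator (fun y => (‖h j y‖₊ : ℝ≥0∞) ^ 2 * (‖f y‖₊ : ℝ≥0∞) ^ 2) x with hW
  have hWmeas : ∀ j, AEMeasurable (W j) volume := by
    intro j
    exact AEMeasurable.indicator
      ((((hmeas j).enorm.pow_const 2).aemeasurable).mul hfnn)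
      isClosed_closure.measurableSet
  have hcast : ∀ (z : ℂ), ((‖z‖₊ : ℝ≥0∞)) ^ 2 = ENNReal.ofReal (‖z‖ ^ 2) := by
    intro z
    rw [ENNReal.ofReal_pow (norm_nonneg _), ofReal_norm, enorm_eq_nnnorm]
  have hu_lin : ∀ j, ENNReal.ofReal (‖u j‖ ^ 2) = ∫⁻ x, W j x := by
    intro j
    rw [norm_sq_ofReal (u j)]
    refine lintegral_congr_ae ?_
    filter_upwards [hu_ae j] with x hx
    rw [hx]
    simp only [hF, hW]
    by_cases hxs : x ∈ closure (S j)
    · rw [Set.indicator_of_mem hxs, Set.indicator_of_mem hxs]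
      simp [nnnorm_mul, RCLike.nnnorm_conj, ENNReal.coe_mul, mul_pow]
    · rw [Set.indicator_of_notMem hxs, Set.indicator_of_notMem hxs]
      simp
  -- upper lintegral bound
  have hupper_lin : (∑' j, ∫⁻ x, W j x)
      ≤ ENNReal.ofReal P * ∫⁻ x, (‖f x‖₊ : ℝ≥0∞) ^ 2 := by
    rw [← lintegral_tsum hWmeas]
    calc ∫⁻ x, ∑' j, W j x
        ≤ ∫⁻ x, ENNReal.ofReal P * (‖f x‖₊ : ℝ≥0∞) ^ 2 := by
          refine lintegral_mono_ae ?_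
          filter_upwards [hRPU, hae_sum] with x hx hsx
          calc ∑' j, W j x
              ≤ ∑' j, (‖h j x‖₊ : ℝ≥0∞) ^ 2 * (‖f x‖₊ : ℝ≥0∞) ^ 2 :=
                ENNReal.tsum_le_tsum (fun j => Set.indicator_le_self _ _ x)
            _ = (∑' j, (‖h j x‖₊ : ℝ≥0∞) ^ 2) * (‖f x‖₊ : ℝ≥0∞) ^ 2 :=
                ENNReal.tsum_mul_right
            _ ≤ ENNReal.ofReal P * (‖f x‖₊ : ℝ≥0∞) ^ 2 := by
                refine mul_le_mul_left ?_ _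
                calc ∑' j, ((‖h j x‖₊ : ℝ≥0∞)) ^ 2
                    = ∑' j, ENNReal.ofReal (‖h j x‖ ^ 2) := tsum_congr fun j => hcast _
                  _ = ENNReal.ofReal (∑' j, ‖h j x‖ ^ 2) :=
                      (ENNReal.ofReal_tsum_of_nonneg (fun j => sq_nonneg _) hsx).symm
                  _ ≤ ENNReal.ofReal P := ENNReal.ofReal_le_ofReal hx.2
      _ = ENNReal.ofReal P * ∫⁻ x, (‖f x‖₊ : ℝ≥0∞) ^ 2 :=
          lintegral_const_mul' _ _ ENNReal.ofReal_ne_top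
  -- lower lintegral bound
  have hlower_lin : ENNReal.ofReal c * ∫⁻ x, (‖f x‖₊ : ℝ≥0∞) ^ 2
      ≤ ∑' j, ∫⁻ x, W j x := by
    have hQae : ∀ᵐ x ∂(volume : Measure (Rd d)), x ∈ ⋃ j, Q j := by
      rw [ae_iff]
      convert hQcover using 2
      ext x; simp
    set V : J → Rd d → ℝ≥0∞ := fun j x =>
      (Q j).indicator (fun y => (‖h j y‖₊ : ℝ≥0∞) ^ 2 * (‖f y‖₊ : ℝ≥0∞) ^ 2) x with hV
    have hVmeas : ∀ j, AEMeasurable (V j) volume := by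
      intro j
      exact AEMeasurable.indicator
        ((((hmeas j).enorm.pow_const 2).aemeasurable).mul hfnn) (hQm j)
    calc ENNReal.ofReal c * ∫⁻ x, (‖f x‖₊ : ℝ≥0∞) ^ 2
        = ∫⁻ x, ENNReal.ofReal c * (‖f x‖₊ : ℝ≥0∞) ^ 2 :=
          (lintegral_const_mul' _ _ ENNReal.ofReal_ne_top).symm
      _ ≤ ∫⁻ x, ∑' j, V j x := by
          refine lintegral_mono_ae ?_
          filter_upwards [hQae, ae_all_iff.2 hlow] with x hxQ hxl
          obtain ⟨j, hj⟩ := Set.mem_iUnion.1 hxQ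
          refine le_trans ?_ (ENNReal.le_tsum j)
          rw [hV]
          simp only []
          rw [Set.indicator_of_mem hj]
          refine mul_le_mul_left ?_ _
          rw [hcast]
          exact ENNReal.ofReal_le_ofReal (hxl j hj)
      _ = ∑' j, ∫⁻ x, V j x := lintegral_tsum hVmeas
      _ ≤ ∑' j, ∫⁻ x, W j x := by
          refine ENNReal.tsum_le_tsum (fun j => lintegral_mono (fun x => ?_))
          exact Set.indicator_le_indicator_of_subset
            ((hQS j).trans subset_closure) (fun y => zero_le) x
  -- assembly in ℝ≥0∞
  set T : J × K → ℝ := fun q => ‖(inner ℂ f (hg q) : ℂ)‖ ^ 2 with hT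
  have hA1 : ∀ j, ENNReal.ofReal (∑' k, T (j,k)) = ∑' k, ENNReal.ofReal (T (j,k)) :=
    fun j => ENNReal.ofReal_tsum_of_nonneg (fun k => sq_nonneg _) (hsumk j)
  have hAprod : (∑' q : J × K, ENNReal.ofReal (T q))
      = ∑' j, ENNReal.ofReal (∑' k, T (j,k)) := by
    have e1 : (∑' q : J × K, ENNReal.ofReal (T q))
        = ∑' (j : J) (k : K), ENNReal.ofReal (T (j,k)) :=
      ENNReal.tsum_prod (f := fun (j : J) (k : K) => ENNReal.ofReal (T (j,k)))
    rw [e1]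
    exact tsum_congr fun j => (hA1 j).symm
  set N := ∫⁻ x, (‖f x‖₊ : ℝ≥0∞) ^ 2 with hN
  have hNf : ENNReal.ofReal (‖f‖ ^ 2) = N := norm_sq_ofReal f
  have hNfin : N ≠ ⊤ := by rw [← hNf]; exact ENNReal.ofReal_ne_top
  have hAupper : (∑' q : J × K, ENNReal.ofReal (T q))
      ≤ ENNReal.ofReal M * (ENNReal.ofReal P * N) := by
    rw [hAprod]
    calc ∑' j, ENNReal.ofReal (∑' k, T (j,k))
        ≤ ∑' j, ENNReal.ofReal (M * ‖u j‖ ^ 2) :=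
          ENNReal.tsum_le_tsum fun j => ENNReal.ofReal_le_ofReal (hhighj j)
      _ = ∑' j, ENNReal.ofReal M * ENNReal.ofReal (‖u j‖ ^ 2) :=
          tsum_congr fun j => ENNReal.ofReal_mul' (sq_nonneg _)
      _ = ENNReal.ofReal M * ∑' j, ENNReal.ofReal (‖u j‖ ^ 2) := ENNReal.tsum_mul_left
      _ = ENNReal.ofReal M * ∑' j, ∫⁻ x, W j x := by
          rw [tsum_congr fun j => hu_lin j]
      _ ≤ ENNReal.ofReal M * (ENNReal.ofReal P * N) := mul_le_mul_right hupper_lin _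
  have hAlower : ENNReal.ofReal (c * m) * N ≤ ∑' q : J × K, ENNReal.ofReal (T q) := by
    rw [hAprod]
    calc ENNReal.ofReal (c * m) * N
        = ENNReal.ofReal m * (ENNReal.ofReal c * N) := by
          rw [ENNReal.ofReal_mul' hm.le]; ring
      _ ≤ ENNReal.ofReal m * ∑' j, ∫⁻ x, W j x := mul_le_mul_right hlower_lin _
      _ = ∑' j, ENNReal.ofReal m * ENNReal.ofReal (‖u j‖ ^ 2) := by
          rw [ENNReal.tsum_mul_left, tsum_congr fun j => hu_lin j]
      _ = ∑' j, ENNReal.ofReal (m * ‖u j‖ ^ 2) :=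
          tsum_congr fun j => (ENNReal.ofReal_mul' (sq_nonneg _)).symm
      _ ≤ ∑' j, ENNReal.ofReal (∑' k, T (j,k)) :=
          ENNReal.tsum_le_tsum fun j => ENNReal.ofReal_le_ofReal (hlowj j)
  -- transfer back to ℝ
  set Tn : J × K → ℝ≥0 := fun q => ‖(inner ℂ f (hg q) : ℂ)‖₊ ^ 2 with hTn
  have hTcoe : ∀ q, (Tn q : ℝ) = T q := by
    intro q; simp [hTn, hT]
  have hTo : ∀ q, ENNReal.ofReal (T q) = (Tn q : ℝ≥0∞) := by
    intro q; rw [← hTcoe q, ENNReal.ofReal_coe_nnreal]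
  have hAne : (∑' q : J × K, ((Tn q : ℝ≥0∞))) ≠ ⊤ := by
    rw [← tsum_congr hTo]
    exact ne_top_of_le_ne_top
      (ENNReal.mul_ne_top ENNReal.ofReal_ne_top
        (ENNReal.mul_ne_top ENNReal.ofReal_ne_top hNfin)) hAupper
  have hTsum_nn : Summable Tn := ENNReal.tsum_coe_ne_top_iff_summable.1 hAne
  have hTsumR : Summable T :=
    (summable_congr hTcoe).1 (NNReal.summable_coe.2 hTsum_nn)
  have hAeq : ENNReal.ofReal (∑' q : J × K, T q) = ∑' q : J × K, ENNReal.ofReal (T q) :=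
    ENNReal.ofReal_tsum_of_nonneg (fun q => sq_nonneg _) hTsumR
  have htsum_nonneg : (0:ℝ) ≤ ∑' q : J × K, T q := tsum_nonneg fun q => sq_nonneg _
  constructor
  · -- lower bound
    have hle : ENNReal.ofReal (c * m * ‖f‖ ^ 2) ≤ ENNReal.ofReal (∑' q : J × K, T q) := by
      rw [hAeq, ENNReal.ofReal_mul' (sq_nonneg _), hNf]
      exact hAlower
    exact (ENNReal.ofReal_le_ofReal_iff htsum_nonneg).1 hle
  · -- upper bound
    by_cases hf0 : ‖f‖ = 0
    · have hfz : f = 0 := norm_eq_zero.mp hf0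
      have : ∀ q : J × K, T q = 0 := by
        intro q; rw [hT]; simp only []; rw [hfz]; simp
      rw [hT] at this
      calc (∑' q : J × K, ‖(inner ℂ f (hg q) : ℂ)‖ ^ 2) = 0 := by
            rw [tsum_congr this]; exact tsum_zero
        _ ≤ P * M * ‖f‖ ^ 2 := by rw [hf0]; ring_nf; exact le_refl 0
    · have hfpos : 0 < ‖f‖ ^ 2 := by positivity
      have hNpos : 0 < N := by
        rw [← hNf]; exact ENNReal.ofReal_pos.2 hfpos
      have hApos : 0 < ∑' q : J × K, ENNReal.ofReal (T q) :=
        lt_of_lt_of_le (ENNReal.mul_pos (ENNReal.ofReal_pos.2 (by positivity)).ne'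
          hNpos.ne') hAlower
      have hM0 : 0 < M := by
        by_contra hM
        push_neg at hM
        have : (∑' q : J × K, ENNReal.ofReal (T q)) = 0 := by
          refine le_antisymm ?_ zero_le
          simpa [ENNReal.ofReal_eq_zero.2 hM] using hAupper
        exact absurd (this ▸ hApos) (lt_irrefl 0)
      have hP0 : 0 < P := by
        by_contra hP
        push_neg at hP
        have : (∑' q : J × K, ENNReal.ofReal (T q)) = 0 := by
          refine le_antisymm ?_ zero_le
          simpa [ENNReal.ofReal_eq_zero.2 hP] using hAupper
        exact absurd (this ▸ hApos) (lt_irrefl 0)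
      have hle : ENNReal.ofReal (∑' q : J × K, T q) ≤ ENNReal.ofReal (P * M * ‖f‖ ^ 2) := by
        rw [hAeq]
        refine le_trans hAupper (le_of_eq ?_)
        rw [ENNReal.ofReal_mul' (sq_nonneg _), ENNReal.ofReal_mul hP0.le, ← hNf]
        ring
      exact (ENNReal.ofReal_le_ofReal_iff (by positivity)).1 hle
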